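/- arXiv:1701.02130 — 2 statements merged into one kernel-verified Lean document; each statement's English description precedes it below -/
import Mathlib

section
/- Let π : M₁ → M₀ be a covering map between metric spaces that is a local isometry. Fix x ∈ M₀, z ∈ M₁ and ρ > 0, and assume that every y ∈ π⁻¹(x) with dist(z, y) < ρ can be joined to z by a continuous path in M₁ of length < ρ. Then there is an injection from the set {y ∈ π⁻¹(x) : dist(z, y) < ρ} into the set of path-homotopy classes (relative to endpoints) of loops in M₀ based at x that admit a representative of length < 2ρ. In particular, if there are at most N such path-homotopy classes, then z lies in at most N of the open balls B(y, ρ) with y ∈ π⁻¹(x). -/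
open scoped ENNReal NNReal

/-- A map between metric spaces is a local isometry if around every point there is a
metric ball on which it preserves distances. -/
def IsLocalIsometry {M₁ M₀ : Type*} [MetricSpace M₁] [MetricSpace M₀] (π : M₁ → M₀) : Prop :=
  ∀ z : M₁, ∃ ε > 0, ∀ a ∈ Metric.ball z ε, ∀ b ∈ Metric.ball z ε, dist (π a) (π b) = dist a b

/-- The length (total variation) of a path in a metric space. -/
noncomputable def pathLength {X : Type*} [MetricSpace X] {a b : X} (γ : Path a b) : ℝ≥0∞ :=
  eVariationOn (fun t => γ t) Set.univ

open Set unitInterval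

section Aux


lemma tendsto_of_mem_pair {α β : Type*} [TopologicalSpace β] {l : Filter α}
    {f g h : α → β} {L : β} (hf : Filter.Tendsto f l (nhds L)) (hg : Filter.Tendsto g l (nhds L))
    (hh : ∀ x, h x = f x ∨ h x = g x) : Filter.Tendsto h l (nhds L) := by
  rw [Filter.tendsto_def] at *
  intro U hU
  have hsub : f ⁻¹' U ∩ g ⁻¹' U ⊆ h ⁻¹' U := by
    rintro x ⟨hx1, hx2⟩
    rcases hh x with h' | h' <;> simp only [Set.mem_preimage, h'] <;> assumption
  exact Filter.mem_of_superset (Filter.inter_mem (hf U hU) (hg U hU)) hsub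

lemma continuousOn_if_le' {α β : Type*} [TopologicalSpace α] [TopologicalSpace β]
    {s : Set α} {f g : α → ℝ} {f' g' : α → β}
    (hf : Continuous f) (hg : Continuous g)
    (hf' : ContinuousOn f' s) (hg' : ContinuousOn g' s)
    (hfg : ∀ x ∈ s, f x = g x → f' x = g' x) :
    ContinuousOn (fun x => if f x ≤ g x then f' x else g' x) s := by
  intro x hx
  rcases lt_trichotomy (f x) (g x) with hlt | heq | hgt
  · have hev : ∀ᶠ y in nhdsWithin x s, f' y = (fun x => if f x ≤ g x then f' x else g' x) y := by
      filter_upwards [nhdsWithin_le_nhds ((isOpen_lt hf hg).mem_nhds hlt)] with y hy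
      simp [le_of_lt hy]
    exact (hf' x hx).congr_of_eventuallyEq (Filter.EventuallyEq.symm hev) (by simp [hlt.le])
  · have h1 : f' x = g' x := hfg x hx heq
    have hval : (if f x ≤ g x then f' x else g' x) = f' x := by simp [heq.le]
    rw [ContinuousWithinAt, hval]
    have hg'' : Filter.Tendsto g' (nhdsWithin x s) (nhds (f' x)) := by
      rw [h1]; exact hg' x hx
    exact tendsto_of_mem_pair (hf' x hx) hg'' fun y => by by_cases h : f y ≤ g y <;> simp [h]
  · have hev : ∀ᶠ y in nhdsWithin x s, g' y = (fun x => if f x ≤ g x then f' x else g' x) y := by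
      filter_upwards [nhdsWithin_le_nhds ((isOpen_lt hg hf).mem_nhds hgt)] with y hy
      simp [not_le.2 hy]
    exact (hg' x hx).congr_of_eventuallyEq (Filter.EventuallyEq.symm hev) (by simp [not_le.2 hgt])

private lemma min1_sub {x y : ℝ} (hyx : y ≤ x) : min x 1 - min y 1 ≤ x - y := by
  rcases le_total x 1 with h | h <;> rcases le_total y 1 with h' | h' <;>
    simp [min_eq_left, min_eq_right, *] <;> linarith

lemma subdiv (c : I → Set I) (hc : ∀ t, IsOpen (c t)) (hmem : ∀ t, t ∈ c t) :
    ∃ (n : ℕ) (a : ℕ → I), 0 < n ∧ Monotone a ∧ a 0 = 0 ∧ (∀ i, n ≤ i → a i = 1) ∧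
      ∀ i, ∃ t, Set.Icc (a i) (a (i + 1)) ⊆ c t := by
  obtain ⟨δ, δpos, hδ⟩ := lebesgue_number_lemma_of_metric (isCompact_univ (X := I)) hc
    (fun t _ => Set.mem_iUnion.2 ⟨t, hmem t⟩)
  obtain ⟨m, hm⟩ := exists_nat_one_div_lt δpos
  set n := m + 1 with hn
  have hnpos : (0:ℝ) < n := by positivity
  have hmem' : ∀ i : ℕ, min ((i : ℝ) / n) 1 ∈ Set.Icc (0:ℝ) 1 :=
    fun i => ⟨le_min (by positivity) zero_le_one, min_le_right _ _⟩
  set a : ℕ → I := fun i => ⟨min ((i : ℝ) / n) 1, hmem' i⟩ with ha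
  have hmono : Monotone a := by
    intro i j hij
    rw [ha, Subtype.mk_le_mk]
    have hij' : (i:ℝ) ≤ j := by exact_mod_cast hij
    exact min_le_min (by gcongr) le_rfl
  refine ⟨n, a, Nat.succ_pos m, hmono, Subtype.ext (by simp [ha]), ?_, ?_⟩
  · intro i hi
    refine Subtype.ext ?_
    simp only [ha]
    exact min_eq_right ((one_le_div hnpos).mpr (by exact_mod_cast hi))
  · intro i
    obtain ⟨t, ht⟩ := hδ (a i) (mem_univ _)
    refine ⟨t, fun u hu => ht ?_⟩
    have h1 : (a i : ℝ) ≤ u := hu.1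
    have h2 : (u : ℝ) ≤ a (i + 1) := hu.2
    have key : (a (i+1) : ℝ) - a i ≤ 1 / n := by
      have hmin := min1_sub (x := ((i:ℝ)+1) / n) (y := (i:ℝ)/n) (by gcongr; linarith)
      have h3 : ((i:ℝ)+1)/n - (i:ℝ)/n = 1/n := by field_simp; ring
      have e1 : (a (i+1) : ℝ) = min ((((i+1):ℕ):ℝ)/n) 1 := rfl
      have e2 : (a i : ℝ) = min ((i:ℝ)/n) 1 := rfl
      rw [e1, e2]
      push_cast [hn] at hmin h3 ⊢
      linarith
    rw [Metric.mem_ball, Subtype.dist_eq, Real.dist_eq, abs_of_nonneg (sub_nonneg.2 h1)]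
    have : 1 / (n:ℝ) = 1 / ((m:ℝ) + 1) := by rw [hn]; push_cast; ring
    linarith

lemma pathLength_symm {X : Type*} [MetricSpace X] {a b : X} (γ : Path a b) :
    pathLength γ.symm = pathLength γ := by
  have h1 : (fun t => γ.symm t) = (fun t => γ t) ∘ unitInterval.symm := by
    funext t; rfl
  have h2 : AntitoneOn unitInterval.symm Set.univ := by
    intro s _ t _ hst
    have h' : (s:ℝ) ≤ t := hst
    rw [← Subtype.coe_le_coe, unitInterval.coe_symm_eq, unitInterval.coe_symm_eq]
    linarith
  rw [pathLength, h1, eVariationOn.comp_eq_of_antitoneOn _ _ h2,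
    Set.image_univ_of_surjective unitInterval.symm_involutive.surjective]
  rfl

lemma pathLength_trans {X : Type*} [MetricSpace X] {a b c : X} (p : Path a b) (q : Path b c) :
    pathLength (p.trans q) = pathLength p + pathLength q := by
  set h : I := ⟨1/2, by norm_num, by norm_num⟩ with hh
  have h0h : (0 : I) ≤ h := Subtype.mk_le_mk.2 (by norm_num)
  have hh1 : h ≤ (1 : I) := Subtype.mk_le_mk.2 (by norm_num)
  have hsplit := eVariationOn.Icc_add_Icc (fun t => (p.trans q) t) (s := Set.univ) h0h hh1
    (Set.mem_univ h)
  simp only [Set.univ_inter] at hsplit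
  -- first half
  have hmem1 : ∀ t : I, min (2 * (t:ℝ)) 1 ∈ Set.Icc (0:ℝ) 1 :=
    fun t => ⟨le_min (by have := t.2.1; linarith) zero_le_one, min_le_right _ _⟩
  set φ : I → I := fun t => ⟨min (2 * (t:ℝ)) 1, hmem1 t⟩ with hφ
  have hfirst : eVariationOn (fun t => (p.trans q) t) (Set.Icc 0 h) = pathLength p := by
    have heq : Set.EqOn (fun t => (p.trans q) t) ((fun t => p t) ∘ φ) (Set.Icc 0 h) := by
      intro t ht
      have ht2 : (t:ℝ) ≤ 1/2 := Subtype.coe_le_coe.2 ht.2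
      simp only [Function.comp_apply, Path.trans_apply, ht2, dif_pos]
      congr 1
      exact Subtype.ext (min_eq_left (by linarith)).symm
    rw [eVariationOn.eq_of_eqOn heq, eVariationOn.comp_eq_of_monotoneOn]
    · congr 1
      apply Set.eq_univ_of_forall
      intro u
      have hu2 : (u:ℝ)/2 ∈ Set.Icc (0:ℝ) 1 := ⟨by have := u.2.1; linarith, by have := u.2.2; linarith⟩
      refine ⟨⟨(u:ℝ)/2, hu2⟩, ⟨Subtype.mk_le_mk.2 (by have := u.2.1; linarith),
        Subtype.mk_le_mk.2 (by have := u.2.2; show (u:ℝ)/2 ≤ 1/2; linarith)⟩, ?_⟩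
      exact Subtype.ext (show min (2 * ((u:ℝ)/2)) 1 = u by
        rw [show 2*((u:ℝ)/2) = (u:ℝ) by ring]; exact min_eq_left u.2.2)
    · intro s _ t _ hst
      exact Subtype.mk_le_mk.2 (min_le_min (by have := Subtype.coe_le_coe.2 hst; linarith) le_rfl)
  -- second half
  have hmem2 : ∀ t : I, max (2 * (t:ℝ) - 1) 0 ∈ Set.Icc (0:ℝ) 1 :=
    fun t => ⟨le_max_right _ _, max_le (by have := t.2.2; linarith) zero_le_one⟩
  set ψ : I → I := fun t => ⟨max (2 * (t:ℝ) - 1) 0, hmem2 t⟩ with hψ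
  have hsecond : eVariationOn (fun t => (p.trans q) t) (Set.Icc h 1) = pathLength q := by
    have heq : Set.EqOn (fun t => (p.trans q) t) ((fun t => q t) ∘ ψ) (Set.Icc h 1) := by
      intro t ht
      have ht2 : (1:ℝ)/2 ≤ (t:ℝ) := Subtype.coe_le_coe.2 ht.1
      rcases eq_or_lt_of_le ht2 with heq' | hlt
      · have hle : (t:ℝ) ≤ 1/2 := le_of_eq heq'.symm
        have e2 : ψ t = 0 := Subtype.ext (show max (2 * (t:ℝ) - 1) 0 = 0 from
          max_eq_right (by linarith))
        simp only [Function.comp_apply, Path.trans_apply, hle, dif_pos, e2, q.source]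
        convert p.target using 2
        exact Subtype.ext (show 2 * (t:ℝ) = 1 by linarith)
      · have hn : ¬((t:ℝ) ≤ 1/2) := not_le.2 hlt
        simp only [Function.comp_apply, Path.trans_apply, hn, dif_neg, not_false_iff]
        congr 1
        exact Subtype.ext (show 2 * (t:ℝ) - 1 = max (2 * (t:ℝ) - 1) 0 from
          (max_eq_left (by linarith)).symm)
    rw [eVariationOn.eq_of_eqOn heq, eVariationOn.comp_eq_of_monotoneOn]
    · congr 1
      apply Set.eq_univ_of_forall
      intro u
      have hu2 : ((u:ℝ)+1)/2 ∈ Set.Icc (0:ℝ) 1 := ⟨by have := u.2.1; linarith, by have := u.2.2; linarith⟩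
      refine ⟨⟨((u:ℝ)+1)/2, hu2⟩, ⟨Subtype.mk_le_mk.2 (show (1:ℝ)/2 ≤ ((u:ℝ)+1)/2 by
        have := u.2.1; linarith),
        Subtype.mk_le_mk.2 (show ((u:ℝ)+1)/2 ≤ 1 by have := u.2.2; linarith)⟩, ?_⟩
      exact Subtype.ext (show max (2 * (((u:ℝ)+1)/2) - 1) 0 = u by
        rw [show 2*(((u:ℝ)+1)/2) - 1 = (u:ℝ) by ring]; exact max_eq_left u.2.1)
    · intro s _ t _ hst
      exact Subtype.mk_le_mk.2 (max_le_max (by have := Subtype.coe_le_coe.2 hst; linarith) le_rfl)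
  rw [pathLength, unitInterval.univ_eq_Icc, ← hsplit, hfirst, hsecond]

lemma eVar_comp_le {M₁ M₀ : Type*} [MetricSpace M₁] [MetricSpace M₀] {π : M₁ → M₀}
    (hloc : IsLocalIsometry π) {γ : I → M₁} (hγ : Continuous γ) :
    eVariationOn (π ∘ γ) Set.univ ≤ eVariationOn γ Set.univ := by
  choose ε hε hiso using hloc
  obtain ⟨n, a, hn, hmono, ha0, han, hsub⟩ := subdiv
    (fun t => γ ⁻¹' Metric.ball (γ t) (ε (γ t)))
    (fun t => (Metric.isOpen_ball).preimage hγ)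
    (fun t => by simp [Metric.mem_ball_self (hε (γ t))])
  have hlip : ∀ i : ℕ, eVariationOn (π ∘ γ) (Set.Icc (a i) (a (i+1))) ≤
      eVariationOn γ (Set.Icc (a i) (a (i+1))) := by
    intro i
    obtain ⟨t, ht⟩ := hsub i
    have hL : LipschitzOnWith 1 π (Metric.ball (γ t) (ε (γ t))) := by
      intro u hu v hv
      rw [edist_dist, edist_dist, hiso (γ t) u hu v hv]
      simp
    have := hL.comp_eVariationOn_le (g := γ) (s := Set.Icc (a i) (a (i+1)))
      (fun u hu => ht hu)
    simpa using this
  have main : ∀ k : ℕ, eVariationOn (π ∘ γ) (Set.Icc (a 0) (a k)) ≤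
      eVariationOn γ (Set.Icc (a 0) (a k)) := by
    intro k
    induction k with
    | zero =>
      rw [eVariationOn.subsingleton (π ∘ γ) (by simp [Set.Icc_self] :
        (Set.Icc (a 0) (a 0)).Subsingleton)]
      exact zero_le
    | succ k ih =>
      have h1 := eVariationOn.Icc_add_Icc (π ∘ γ) (s := Set.univ)
        (hmono (Nat.zero_le k)) (hmono (Nat.le_succ k)) (Set.mem_univ _)
      have h2 := eVariationOn.Icc_add_Icc γ (s := Set.univ)
        (hmono (Nat.zero_le k)) (hmono (Nat.le_succ k)) (Set.mem_univ _)
      simp only [Set.univ_inter] at h1 h2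
      rw [← h1, ← h2]
      exact add_le_add ih (hlip k)
  have := main n
  rw [ha0, han n le_rfl] at this
  rwa [unitInterval.univ_eq_Icc]

lemma local_lift {E X : Type*} [TopologicalSpace E] [TopologicalSpace X]
    {p : E → X} (hp : IsCoveringMap p) {H : I × I → X} (Hc : Continuous H)
    {z : E} (h0 : ∀ s : I, H (s, 0) = p z) (s₀ : I) :
    ∃ V : Set I, IsOpen V ∧ s₀ ∈ V ∧ IsPreconnected V ∧
      ∃ G : I × I → E, ContinuousOn G (V ×ˢ (Set.univ : Set I)) ∧
        (∀ q ∈ V ×ˢ (Set.univ : Set I), p (G q) = H q) ∧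
        (∀ s ∈ V, G (s, 0) = z) := by
  classical
  haveI hne : ∀ t : I, Nonempty (p ⁻¹' {H (s₀, t)}) := by
    obtain ⟨Γ, hΓ, hΓ0⟩ := hp.exists_path_lifts ⟨fun t => H (s₀, t), by fun_prop⟩ z (h0 s₀)
    intro t
    exact ⟨⟨Γ t, congrFun hΓ t⟩⟩
  set U : I → Set X := fun t => ((hp (H (s₀, t))).toTrivialization).baseSet with hUdef
  have hUopen : ∀ t, IsOpen (U t) := fun t => ((hp (H (s₀, t))).toTrivialization).open_baseSet
  have hUmem : ∀ t, H (s₀, t) ∈ U t := fun t =>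
    IsEvenlyCovered.mem_toTrivialization_baseSet (hp (H (s₀, t)))
  -- rectangles
  have hrect : ∀ t : I, ∃ A B : Set I, IsOpen A ∧ IsOpen B ∧ s₀ ∈ A ∧ t ∈ B ∧
      A ×ˢ B ⊆ H ⁻¹' (U t) := by
    intro t
    have hWopen : IsOpen (H ⁻¹' (U t)) := (hUopen t).preimage Hc
    obtain ⟨A, B, hA, hB, hsA, htB, hAB⟩ := isOpen_prod_iff.mp hWopen s₀ t (hUmem t)
    exact ⟨A, B, hA, hB, hsA, htB, hAB⟩
  choose A B hAopen hBopen hsA htB hAB using hrect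
  obtain ⟨n, a, hn, hmono, ha0, han, hsub⟩ := subdiv B hBopen htB
  choose τ hτ using hsub
  -- the preconnected neighbourhood V
  set V₀ : Set I := ⋂ i ∈ Finset.range n, A (τ i) with hV₀def
  have hV₀open : IsOpen V₀ := isOpen_biInter_finset fun i _ => hAopen (τ i)
  have hs₀V₀ : s₀ ∈ V₀ := Set.mem_iInter₂.2 fun i _ => hsA (τ i)
  obtain ⟨r, hr, hball⟩ := Metric.isOpen_iff.mp hV₀open s₀ hs₀V₀
  set V : Set I := Subtype.val ⁻¹' Metric.ball (s₀ : ℝ) r with hVdef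
  have hVeq : V = Metric.ball s₀ r := by
    ext u; simp [hVdef, Metric.mem_ball, Subtype.dist_eq, Real.dist_eq]
  have hVopen : IsOpen V := Metric.isOpen_ball.preimage continuous_subtype_val
  have hs₀V : s₀ ∈ V := by rw [hVeq]; exact Metric.mem_ball_self hr
  have hVV₀ : V ⊆ V₀ := by rw [hVeq]; exact hball
  have hVpre : IsPreconnected V := by
    have himg : Subtype.val '' V = Metric.ball (s₀ : ℝ) r ∩ Set.Icc (0:ℝ) 1 := by
      rw [hVdef, Subtype.image_preimage_coe]
      ext u; simp [Set.mem_Icc, and_comm]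
    have hconv : Convex ℝ (Metric.ball (s₀ : ℝ) r ∩ Set.Icc (0:ℝ) 1) :=
      (convex_ball _ _).inter (convex_Icc _ _)
    have := hconv.isPreconnected
    rw [← himg] at this
    exact ((Topology.IsInducing.subtypeVal).isPreconnected_image).mp this
  have hVA : ∀ i < n, V ⊆ A (τ i) := fun i hi =>
    hVV₀.trans (Set.biInter_subset_of_mem (Finset.mem_range.2 hi))
  -- key containment
  have hkey : ∀ i < n, ∀ s ∈ V, ∀ t ∈ Set.Icc (a i) (a (i + 1)), H (s, t) ∈ U (τ i) := by
    intro i hi s hs t ht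
    exact hAB (τ i) ⟨hVA i hi hs, hτ i ht⟩
  -- induction
  have main : ∀ i : ℕ, ∃ G : I × I → E, ContinuousOn G (V ×ˢ (Set.univ : Set I)) ∧
      (∀ s ∈ V, ∀ t : I, t ≤ a i → p (G (s, t)) = H (s, t)) ∧
      (∀ s ∈ V, G (s, 0) = z) := by
    intro i
    induction i with
    | zero =>
      refine ⟨fun _ => z, continuousOn_const, ?_, fun s _ => rfl⟩
      intro s _ t ht
      rw [ha0] at ht
      have ht0 : t = 0 := le_antisymm ht (unitInterval.nonneg' : 0 ≤ t)
      rw [ht0, h0 s]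
    | succ i ih =>
      obtain ⟨G, hGcont, hGlift, hG0⟩ := ih
      by_cases hin : i < n
      case neg =>
        refine ⟨G, hGcont, ?_, hG0⟩
        intro s hs t ht
        exact hGlift s hs t (by rw [han i (le_of_not_gt hin)]; exact unitInterval.le_one')
      case pos =>
      set T : Bundle.Trivialization (p ⁻¹' {H (s₀, τ i)}) p := (hp (H (s₀, τ i))).toTrivialization
        with hTdef
      have hTbase : U (τ i) = T.baseSet := rfl
      have haii : a i ≤ a (i + 1) := hmono (Nat.le_succ i)
      -- clamping map
      have hclmem : ∀ t : I, max ((a i : ℝ)) (min (t : ℝ) ((a (i+1) : ℝ))) ∈ Set.Icc (0:ℝ) 1 := by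
        intro t
        constructor
        · exact le_trans (a i).2.1 (le_max_left _ _)
        · exact max_le (a i).2.2 (le_trans (min_le_right _ _) (a (i+1)).2.2)
      set cl : I → I := fun t => ⟨max ((a i : ℝ)) (min (t : ℝ) ((a (i+1) : ℝ))), hclmem t⟩
        with hcldef
      have hclcont : Continuous cl :=
        Continuous.subtype_mk (continuous_const.max (continuous_subtype_val.min
          continuous_const)) _
      have hclmem' : ∀ t : I, cl t ∈ Set.Icc (a i) (a (i + 1)) := by
        intro t
        constructor
        · exact Subtype.mk_le_mk.2 (le_max_left _ _)
        · exact Subtype.mk_le_mk.2 (max_le (Subtype.coe_le_coe.2 haii) (min_le_right _ _))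
      have hcleq : ∀ t : I, a i ≤ t → t ≤ a (i + 1) → cl t = t := by
        intro t h1 h2
        exact Subtype.ext (by
          rw [hcldef]
          simp only
          rw [min_eq_left (Subtype.coe_le_coe.2 h2), max_eq_right (Subtype.coe_le_coe.2 h1)])
      -- previous endpoints are in the source of T
      have hGsource : ∀ s ∈ V, G (s, a i) ∈ T.source := by
        intro s hs
        rw [T.mem_source, ← hTbase]
        rw [hGlift s hs (a i) le_rfl]
        exact hkey i hin s hs (a i) ⟨le_rfl, haii⟩
      -- the new branch
      set g₂ : I × I → E := fun q =>
        T.toOpenPartialHomeomorph.symm (H (q.1, cl q.2), (T (G (q.1, a i))).2) with hg₂def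
      have hg₂target : ∀ q ∈ V ×ˢ (Set.univ : Set I),
          (H (q.1, cl q.2), (T (G (q.1, a i))).2) ∈ T.target := by
        intro q hq
        rw [T.mem_target]
        exact hTbase ▸ hkey i hin q.1 hq.1 (cl q.2) (hclmem' q.2)
      have hg₂cont : ContinuousOn g₂ (V ×ˢ (Set.univ : Set I)) := by
        have hprev : ContinuousOn (fun q : I × I => G (q.1, a i)) (V ×ˢ (Set.univ : Set I)) := by
          apply hGcont.comp (Continuous.continuousOn (by fun_prop))
          intro q hq
          exact ⟨hq.1, Set.mem_univ _⟩
        have hTprev : ContinuousOn (fun q : I × I => (T (G (q.1, a i))).2)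
            (V ×ˢ (Set.univ : Set I)) := by
          have := (T.toOpenPartialHomeomorph.continuousOn.comp hprev
            (fun q hq => hGsource q.1 hq.1))
          exact continuous_snd.comp_continuousOn this
        have hfst : Continuous (fun q : I × I => H (q.1, cl q.2)) := by
          apply Hc.comp
          exact continuous_fst.prodMk (hclcont.comp continuous_snd)
        apply T.toOpenPartialHomeomorph.symm.continuousOn.comp
          (hfst.continuousOn.prodMk hTprev) hg₂target
      -- gluing
      refine ⟨fun q => if ((q.2 : ℝ)) ≤ ((a i : ℝ)) then G q else g₂ q, ?_, ?_, ?_⟩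
      · apply continuousOn_if_le' (by fun_prop) continuous_const hGcont hg₂cont
        rintro ⟨s, t⟩ hq hqa
        have hq2 : t = a i := Subtype.ext hqa
        have hsrc := hGsource s hq.1
        have hcl : cl t = a i := by rw [hq2]; exact hcleq (a i) le_rfl haii
        have hH : H (s, cl t) = p (G (s, a i)) := by
          rw [hcl]; exact (hGlift s hq.1 (a i) le_rfl).symm
        have hpair : (H (s, cl t), (T (G (s, a i))).2) = T (G (s, a i)) := by
          rw [hH]
          exact T.mk_proj_snd' (by rw [← T.mem_source]; exact hsrc)
        have hli : T.toOpenPartialHomeomorph.symm (T (G (s, a i))) = G (s, a i) :=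
          T.toOpenPartialHomeomorph.left_inv hsrc
        show G (s, t) = g₂ (s, t)
        rw [hg₂def]
        simp only
        rw [hpair, hli, hq2]
      · intro s hs t ht
        by_cases hta : (t : ℝ) ≤ (a i : ℝ)
        · simp only [hta, if_pos]
          exact hGlift s hs t (Subtype.coe_le_coe.1 hta)
        · simp only [hta, if_neg, not_false_iff]
          have hat : a i ≤ t := le_of_lt (Subtype.coe_lt_coe.1 (lt_of_not_ge hta))
          have hcl : cl t = t := hcleq t hat ht
          have := T.proj_symm_apply (hg₂target (s, t) ⟨hs, Set.mem_univ _⟩)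
          rw [hg₂def]
          simp only
          rw [this, hcl]
      · intro s hs
        have h0a : ((0 : I) : ℝ) ≤ (a i : ℝ) := (a i).2.1
        simp only [h0a, if_pos]
        exact hG0 s hs
  obtain ⟨G, hGcont, hGlift, hG0⟩ := main n
  refine ⟨V, hVopen, hs₀V, hVpre, G, hGcont, ?_, hG0⟩
  intro q hq
  have := hGlift q.1 hq.1 q.2 (by rw [han n le_rfl]; exact unitInterval.le_one')
  simpa using this

lemma lift_endpoint_eq {E X : Type*} [TopologicalSpace E] [TopologicalSpace X]
    {p : E → X} (hp : IsCoveringMap p) {H : I × I → X} (Hc : Continuous H)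
    {z : E} (h0 : ∀ s : I, H (s, 0) = p z) (h1 : ∀ s : I, H (s, 1) = H (0, 1))
    {Γ₀ Γ₁ : I → E} (c₀ : Continuous Γ₀) (c₁ : Continuous Γ₁)
    (l₀ : ∀ t, p (Γ₀ t) = H (0, t)) (l₁ : ∀ t, p (Γ₁ t) = H (1, t))
    (st₀ : Γ₀ 0 = z) (st₁ : Γ₁ 0 = z) : Γ₀ 1 = Γ₁ 1 := by
  classical
  set S : Set I := {s : I | ∃ Γ : I → E, Continuous Γ ∧ (∀ t, p (Γ t) = H (s, t)) ∧
    Γ 0 = z ∧ Γ 1 = Γ₀ 1} with hSdef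
  have huniq : ∀ s : I, ∀ Γ Γ' : I → E, Continuous Γ → Continuous Γ' →
      (∀ t, p (Γ t) = H (s, t)) → (∀ t, p (Γ' t) = H (s, t)) → Γ 0 = z → Γ' 0 = z → Γ = Γ' := by
    intro s Γ Γ' hc hc' hl hl' h0' h0''
    exact hp.eq_of_comp_eq hc hc' (funext fun t => (hl t).trans (hl' t).symm) 0
      (h0'.trans h0''.symm)
  have hlocal : ∀ s₀ : I, ∃ V : Set I, IsOpen V ∧ s₀ ∈ V ∧ ∀ s ∈ V, (s ∈ S ↔ s₀ ∈ S) := by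
    intro s₀
    obtain ⟨V, hVopen, hs₀V, hVpre, G, hGcont, hGlift, hG0⟩ := local_lift hp Hc h0 s₀
    -- the canonical lifts on V
    have hΛcont : ∀ s ∈ V, Continuous (fun t : I => G (s, t)) := by
      intro s hs
      apply hGcont.comp_continuous (continuous_const.prodMk continuous_id)
      intro t
      exact ⟨hs, Set.mem_univ _⟩
    have hΛlift : ∀ s ∈ V, ∀ t : I, p (G (s, t)) = H (s, t) := fun s hs t =>
      hGlift (s, t) ⟨hs, Set.mem_univ _⟩
    -- constancy of the endpoint on V
    have hend : ∀ s ∈ V, G (s, 1) = G (s₀, 1) := by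
      intro s hs
      have hcont1 : ContinuousOn (fun s : I => G (s, 1)) V := by
        apply hGcont.comp (Continuous.continuousOn (by fun_prop))
        intro u hu
        exact ⟨hu, Set.mem_univ _⟩
      exact hp.constOn_of_comp hVpre hcont1
        (fun u hu u' hu' => by
          rw [hΛlift u hu 1, hΛlift u' hu' 1, h1 u, h1 u'])
        hs hs₀V
    refine ⟨V, hVopen, hs₀V, ?_⟩
    intro s hs
    constructor
    · rintro ⟨Γ, hΓc, hΓl, hΓ0, hΓ1⟩
      have := huniq s Γ (fun t => G (s, t)) hΓc (hΛcont s hs) hΓl (hΛlift s hs) hΓ0 (hG0 s hs)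
      refine ⟨fun t => G (s₀, t), hΛcont s₀ hs₀V, hΛlift s₀ hs₀V, hG0 s₀ hs₀V, ?_⟩
      show G (s₀, 1) = Γ₀ 1
      rw [← hend s hs, ← congrFun this 1, hΓ1]
    · rintro ⟨Γ, hΓc, hΓl, hΓ0, hΓ1⟩
      have := huniq s₀ Γ (fun t => G (s₀, t)) hΓc (hΛcont s₀ hs₀V) hΓl (hΛlift s₀ hs₀V) hΓ0
        (hG0 s₀ hs₀V)
      refine ⟨fun t => G (s, t), hΛcont s hs, hΛlift s hs, hG0 s hs, ?_⟩
      show G (s, 1) = Γ₀ 1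
      rw [hend s hs, ← congrFun this 1, hΓ1]
  have hSopen : IsOpen S := by
    rw [isOpen_iff_forall_mem_open]
    intro s hs
    obtain ⟨V, hVopen, hsV, hiff⟩ := hlocal s
    exact ⟨V, fun u hu => (hiff u hu).2 hs, hVopen, hsV⟩
  have hScopen : IsOpen Sᶜ := by
    rw [isOpen_iff_forall_mem_open]
    intro s hs
    obtain ⟨V, hVopen, hsV, hiff⟩ := hlocal s
    exact ⟨V, fun u hu hu' => hs ((hiff u hu).1 hu'), hVopen, hsV⟩
  have hclopen : IsClopen S := ⟨by rw [← isOpen_compl_iff]; exact hScopen, hSopen⟩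
  have h0S : (0 : I) ∈ S := ⟨Γ₀, c₀, l₀, st₀, rfl⟩
  have hSuniv : S = Set.univ := hclopen.eq_univ ⟨0, h0S⟩
  have h1S : (1 : I) ∈ S := hSuniv ▸ Set.mem_univ _
  obtain ⟨Γ, hΓc, hΓl, hΓ0, hΓ1⟩ := h1S
  have := huniq 1 Γ₁ Γ c₁ hΓc l₁ hΓl st₁ hΓ0
  rw [congrFun this 1, hΓ1]

end Aux

/-- **Lemma 2.1.** Let `π : M₁ → M₀` be a covering map between metric spaces which is a
local isometry, `x ∈ M₀`, `z ∈ M₁`, `ρ > 0`, and assume every `y ∈ π⁻¹(x)` with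
`dist z y < ρ` can be joined to `z` by a path of length `< ρ`. Then the fiber points
`y ∈ π⁻¹(x)` with `dist z y < ρ` inject into the path-homotopy classes of loops at `x`
having a representative of length `< 2ρ`; in particular, if there are at most `N` such
classes, then `z` lies in at most `N` of the balls `B(y, ρ)`, `y ∈ π⁻¹(x)`. -/
theorem fiber_points_inject_into_short_loop_classes
    {M₁ M₀ : Type*} [MetricSpace M₁] [MetricSpace M₀]
    (π : M₁ → M₀) (hcov : IsCoveringMap π) (hloc : IsLocalIsometry π)
    (x : M₀) (z : M₁) (ρ : ℝ) (hρ : 0 < ρ)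
    (hpath : ∀ y : M₁, π y = x → dist z y < ρ →
      ∃ γ : Path z y, pathLength γ < ENNReal.ofReal ρ) :
    (∃ Φ : {y : M₁ // π y = x ∧ dist z y < ρ} →
        {c : Path.Homotopic.Quotient x x //
          ∃ γ : Path x x, ⟦γ⟧ = c ∧ pathLength γ < ENNReal.ofReal (2 * ρ)},
      Function.Injective Φ) ∧
    (∀ N : ℕ,
      {c : Path.Homotopic.Quotient x x |
        ∃ γ : Path x x, ⟦γ⟧ = c ∧ pathLength γ < ENNReal.ofReal (2 * ρ)}.Finite →
      {c : Path.Homotopic.Quotient x x |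
        ∃ γ : Path x x, ⟦γ⟧ = c ∧ pathLength γ < ENNReal.ofReal (2 * ρ)}.ncard ≤ N →
      {y : M₁ | π y = x ∧ z ∈ Metric.ball y ρ}.Finite ∧
        {y : M₁ | π y = x ∧ z ∈ Metric.ball y ρ}.ncard ≤ N) := by
  classical
  have hπc : Continuous π := hcov.continuous
  obtain ⟨Φ, hΦ⟩ : ∃ Φ : {y : M₁ // π y = x ∧ dist z y < ρ} →
      {c : Path.Homotopic.Quotient x x //
        ∃ γ : Path x x, ⟦γ⟧ = c ∧ pathLength γ < ENNReal.ofReal (2 * ρ)},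
      Function.Injective Φ := by
    by_cases hne : Nonempty {y : M₁ // π y = x ∧ dist z y < ρ}
    case neg =>
      have hD : IsEmpty {y : M₁ // π y = x ∧ dist z y < ρ} := not_nonempty_iff.mp hne
      exact ⟨fun y => hD.elim y, fun a => (hD.elim a)⟩
    case pos =>
    choose γ hγ using fun (y : {y : M₁ // π y = x ∧ dist z y < ρ}) =>
      hpath y.1 y.2.1 y.2.2
    set σp : {y : M₁ // π y = x ∧ dist z y < ρ} → Path (π z) x :=
      fun y => ((γ y).map hπc).cast rfl y.2.1.symm with hσpdef
    have hσ_coe : ∀ y t, (σp y) t = π ((γ y) t) := by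
      intro y t
      simp [hσpdef, Path.cast]
    have hσlen : ∀ y, pathLength (σp y) < ENNReal.ofReal ρ := by
      intro y
      have h1 : pathLength (σp y) = eVariationOn (π ∘ fun t => (γ y) t) Set.univ := by
        apply eVariationOn.eq_of_eqOn
        intro t _
        exact hσ_coe y t
      rw [h1]
      exact lt_of_le_of_lt (eVar_comp_le hloc (γ y).continuous) (hγ y)
    obtain ⟨y₀⟩ := hne
    set Loop : {y : M₁ // π y = x ∧ dist z y < ρ} → Path x x :=
      fun y => (σp y₀).symm.trans (σp y) with hLoopdef
    have hLooplen : ∀ y, pathLength (Loop y) < ENNReal.ofReal (2 * ρ) := by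
      intro y
      rw [hLoopdef]
      simp only
      rw [pathLength_trans, pathLength_symm]
      calc pathLength (σp y₀) + pathLength (σp y)
          < ENNReal.ofReal ρ + ENNReal.ofReal ρ := ENNReal.add_lt_add (hσlen y₀) (hσlen y)
        _ = ENNReal.ofReal (2 * ρ) := by rw [← ENNReal.ofReal_add hρ.le hρ.le]; ring_nf
    refine ⟨fun y => ⟨⟦Loop y⟧, Loop y, rfl, hLooplen y⟩, ?_⟩
    intro y y' hyy
    have hq : (⟦Loop y⟧ : Path.Homotopic.Quotient x x) = ⟦Loop y'⟧ :=
      congrArg Subtype.val hyy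
    have hhom : (Loop y).Homotopic (Loop y') := Quotient.exact hq
    obtain ⟨h⟩ := hhom
    -- lift the homotopy's endpoints
    have hproj : ∀ (w : {y : M₁ // π y = x ∧ dist z y < ρ}) (t : I),
        π (((γ y₀).symm.trans (γ w)) t) = (Loop w) t := by
      intro w t
      rw [hLoopdef]
      simp only
      rw [Path.trans_apply, Path.trans_apply]
      split_ifs with h'
      · simp only [Path.symm_apply, Function.comp_apply]
        exact (hσ_coe y₀ _).symm
      · exact (hσ_coe w _).symm
    have h0mem : (0 : I) ∈ ({0, 1} : Set I) := Set.mem_insert _ _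
    have h1mem : (1 : I) ∈ ({0, 1} : Set I) := Set.mem_insert_of_mem _ rfl
    have key := lift_endpoint_eq (p := π) hcov (H := fun q : I × I => h q)
      (h.continuous) (z := y₀.1)
      (fun s => by
        show h (s, (0:I)) = π (y₀ : M₁)
        rw [show h (s, (0:I)) = (Loop y) 0 from h.eq_fst s h0mem]
        rw [(Loop y).source, y₀.2.1])
      (fun s => by
        show h (s, (1:I)) = h ((0:I), (1:I))
        rw [show h (s, (1:I)) = (Loop y) 1 from h.eq_fst s h1mem,
          show h ((0:I), (1:I)) = (Loop y) 1 from h.eq_fst 0 h1mem])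
      (Γ₀ := fun t => ((γ y₀).symm.trans (γ y)) t)
      (Γ₁ := fun t => ((γ y₀).symm.trans (γ y')) t)
      (((γ y₀).symm.trans (γ y)).continuous)
      (((γ y₀).symm.trans (γ y')).continuous)
      (fun t => by
        show π (((γ y₀).symm.trans (γ y)) t) = h ((0:I), t)
        rw [show h ((0:I), t) = (Loop y) t from h.apply_zero t]; exact hproj y t)
      (fun t => by
        show π (((γ y₀).symm.trans (γ y')) t) = h ((1:I), t)
        rw [show h ((1:I), t) = (Loop y') t from h.apply_one t]; exact hproj y' t)
      (((γ y₀).symm.trans (γ y)).source)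
      (((γ y₀).symm.trans (γ y')).source)
    have hyval : (y : M₁) = y' := by
      rw [← ((γ y₀).symm.trans (γ y)).target, ← ((γ y₀).symm.trans (γ y')).target]
      exact key
    exact Subtype.ext hyval
  refine ⟨⟨Φ, hΦ⟩, ?_⟩
  intro N hTfin hTcard
  have hSeq : {y : M₁ | π y = x ∧ z ∈ Metric.ball y ρ} =
      {y : M₁ | π y = x ∧ dist z y < ρ} := by
    ext y; simp [Metric.mem_ball]
  haveI hfinT : Finite ↥{c : Path.Homotopic.Quotient x x |
      ∃ γ : Path x x, ⟦γ⟧ = c ∧ pathLength γ < ENNReal.ofReal (2 * ρ)} := hTfin.to_subtype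
  haveI hfinT' : Finite {c : Path.Homotopic.Quotient x x //
      ∃ γ : Path x x, ⟦γ⟧ = c ∧ pathLength γ < ENNReal.ofReal (2 * ρ)} := hfinT
  have hfinD : Finite {y : M₁ // π y = x ∧ dist z y < ρ} := Finite.of_injective Φ hΦ
  constructor
  · rw [hSeq]
    exact Set.finite_coe_iff.mp hfinD
  · rw [hSeq]
    calc {y : M₁ | π y = x ∧ dist z y < ρ}.ncard
        = Nat.card {y : M₁ // π y = x ∧ dist z y < ρ} := (Nat.card_coe_set_eq _).symm
      _ ≤ Nat.card ↥{c : Path.Homotopic.Quotient x x |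
            ∃ γ : Path x x, ⟦γ⟧ = c ∧ pathLength γ < ENNReal.ofReal (2 * ρ)} :=
          Nat.card_le_card_of_injective Φ hΦ
      _ = _ := Nat.card_coe_set_eq _
      _ ≤ N := hTcard
end

section
/- Let π : M₁ → M₀ be a covering map between metric spaces that is a local isometry. Fix x ∈ M₀ and y ∈ π⁻¹(x), and let D_y = {z ∈ M₁ : dist(z, y) ≤ dist(z, y′) for all y′ ∈ π⁻¹(x)} be the Dirichlet fundamental domain centered at y. If z ∈ D_y and there exists a continuous path in M₀ from π(z) to x of length < r, then dist(z, y) < r. Consequently, if K ⊆ M₀ is a set such that every point of K can be joined to x by a continuous path in M₀ of length < r, then π⁻¹(K) ∩ D_y is contained in the open ball B(y, r). -/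
open scoped ENNReal NNReal

/-- The Dirichlet fundamental domain of `π` centered at a fiber point `y ∈ π⁻¹(x)`. -/
def dirichletDomain {M₁ M₀ : Type*} [MetricSpace M₁] [MetricSpace M₀]
    (π : M₁ → M₀) (x : M₀) (y : M₁) : Set M₁ :=
  {z : M₁ | ∀ y' : M₁, π y' = x → dist z y ≤ dist z y'}

open Set in
/-- Metric estimate for a local lift: if `σ` is continuous on `[a,b]` and `π ∘ σ = g` there,
with `π` a local isometry, then the distance between the endpoints of `σ` is bounded by the
variation of `g` on `[a,b]`. -/
lemma lift_edist_le {M₁ M₀ : Type*} [MetricSpace M₁] [MetricSpace M₀]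
    {π : M₁ → M₀} (hloc : IsLocalIsometry π) (g : ℝ → M₀)
    {a b : ℝ} (hab : a ≤ b) {σ : ℝ → M₁}
    (hσc : ContinuousOn σ (Icc a b)) (hσ : ∀ u ∈ Icc a b, π (σ u) = g u) :
    edist (σ a) (σ b) ≤ eVariationOn g (Icc a b) := by
  set T : Set ℝ := {u | u ∈ Icc a b ∧ edist (σ a) (σ u) ≤ eVariationOn g (Icc a u)} with hT
  have haT : a ∈ T := ⟨⟨le_rfl, hab⟩, by simp⟩
  have hTne : T.Nonempty := ⟨a, haT⟩
  have hbdd : BddAbove T := ⟨b, fun u hu => hu.1.2⟩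
  set s := sSup T with hs
  have hsa : a ≤ s := le_csSup hbdd haT
  have hsb : s ≤ b := csSup_le hTne fun u hu => hu.1.2
  have hsI : s ∈ Icc a b := ⟨hsa, hsb⟩
  obtain ⟨ε, εpos, hε⟩ := hloc (σ s)
  obtain ⟨δ, δpos, hδ⟩ := Metric.continuousWithinAt_iff.mp (hσc s hsI) ε εpos
  have key : ∀ u ∈ Icc a b, s ≤ u → u - s < δ → u ∈ T := by
    intro u huI hsu hud
    obtain ⟨t, htT, htδ⟩ := exists_lt_of_lt_csSup hTne (by linarith : s - δ < s)
    have hts : t ≤ s := le_csSup hbdd htT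
    have htI : t ∈ Icc a b := htT.1
    have hσt : σ t ∈ Metric.ball (σ s) ε := by
      apply hδ htI
      rw [Real.dist_eq, abs_lt]; constructor <;> linarith
    have hσu : σ u ∈ Metric.ball (σ s) ε := by
      apply hδ huI
      rw [Real.dist_eq, abs_lt]; constructor <;> linarith
    have hdd : dist (σ t) (σ u) = dist (g t) (g u) := by
      rw [← hσ t htI, ← hσ u huI]; exact (hε _ hσt _ hσu).symm
    have hed : edist (σ t) (σ u) = edist (g t) (g u) := by
      rw [edist_dist, edist_dist, hdd]
    have h1 : edist (g t) (g u) ≤ eVariationOn g (Icc t u) :=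
      eVariationOn.edist_le g (left_mem_Icc.mpr (hts.trans hsu)) (right_mem_Icc.mpr (hts.trans hsu))
    have hadd := eVariationOn.Icc_add_Icc g (s := univ) htI.1 (hts.trans hsu) (mem_univ t)
    simp only [univ_inter] at hadd
    refine ⟨huI, ?_⟩
    calc edist (σ a) (σ u) ≤ edist (σ a) (σ t) + edist (σ t) (σ u) := edist_triangle _ _ _
      _ ≤ eVariationOn g (Icc a t) + eVariationOn g (Icc t u) := by
          exact add_le_add htT.2 (hed ▸ h1)
      _ = eVariationOn g (Icc a u) := hadd
  have hsT : s ∈ T := key s hsI le_rfl (by linarith)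
  have hsb' : s = b := by
    by_contra hne
    have hslt : s < b := lt_of_le_of_ne hsb hne
    set u := min b (s + δ / 2) with hu
    have huI : u ∈ Icc a b := ⟨le_min (hsa.trans hsb) (by linarith), min_le_left _ _⟩
    have hsu : s ≤ u := le_min hsb (by linarith)
    have huT : u ∈ T := key u huI hsu (by
      have : u ≤ s + δ / 2 := min_le_right _ _
      linarith)
    have : u ≤ s := le_csSup hbdd huT
    have hsu' : s < u := lt_min hslt (by linarith)
    linarith
  rw [← hsb']
  exact hsT.2

open Set in
/-- Main step: given a path from `π z` to `x` of finite variation, there is a point `w`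
in the fiber over `x` with `edist z w ≤ pathLength γ`. -/
lemma exists_fiber_point {M₁ M₀ : Type*} [MetricSpace M₁] [MetricSpace M₀]
    {π : M₁ → M₀} (hcov : IsCoveringMap π) (hloc : IsLocalIsometry π)
    {x : M₀} (z : M₁) (γ : Path (π z) x) :
    ∃ w : M₁, π w = x ∧ edist z w ≤ pathLength γ := by
  set g : ℝ → M₀ := fun u => γ (Set.projIcc 0 1 zero_le_one u) with hgdef
  have hgc : Continuous g := γ.continuous.comp continuous_projIcc
  have hg0 : g 0 = π z := by simp [hgdef]
  have hg1 : g 1 = x := by simp [hgdef]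
  have hvar : eVariationOn g (Icc 0 1) = pathLength γ := by
    have := eVariationOn.comp_eq_of_monotoneOn (fun t => γ t)
      (Set.projIcc (0:ℝ) 1 zero_le_one) ((monotone_projIcc zero_le_one).monotoneOn (Icc 0 1))
    rw [hgdef]
    show eVariationOn ((fun t => γ t) ∘ Set.projIcc 0 1 zero_le_one) (Icc 0 1) = _
    rw [this]
    unfold pathLength
    congr 1
    apply eq_univ_of_forall
    intro t
    exact ⟨t.1, t.2, Set.projIcc_val zero_le_one t⟩
  set S : Set ℝ := {t | t ∈ Icc (0:ℝ) 1 ∧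
    ∃ w, π w = g t ∧ edist z w ≤ eVariationOn g (Icc 0 t)} with hS
  have h0S : (0:ℝ) ∈ S := ⟨⟨le_rfl, zero_le_one⟩, z, hg0.symm, by simp⟩
  have hSne : S.Nonempty := ⟨0, h0S⟩
  have hbdd : BddAbove S := ⟨1, fun u hu => hu.1.2⟩
  set s := sSup S with hs
  have hsa : (0:ℝ) ≤ s := le_csSup hbdd h0S
  have hsb : s ≤ 1 := csSup_le hSne fun u hu => hu.1.2
  -- evenly covered neighborhood of g s
  have hec := hcov (g s)
  have : Nonempty (π ⁻¹' {g s}) := by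
    have hcl : IsClopen (Set.range π) := by
      refine ⟨?_, hcov.isOpenMap.isOpen_range⟩
      rw [← isOpen_compl_iff, isOpen_iff_forall_mem_open]
      intro x hx
      obtain ⟨_, U, hxU, hU, _, H, _⟩ := hcov x
      refine ⟨U, ?_, hU, hxU⟩
      rintro _ hyU ⟨e, rfl⟩
      exact hx ⟨(H ⟨e, hyU⟩).2.1, (H ⟨e, hyU⟩).2.2⟩
    obtain ⟨w, hw⟩ := (isPreconnected_range hgc).subset_isClopen hcl
      ⟨π z, ⟨0, hg0⟩, z, rfl⟩ ⟨s, rfl⟩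
    exact ⟨⟨w, hw⟩⟩
  set T := hec.toTrivialization with hT
  have hU : g s ∈ T.baseSet := hec.mem_toTrivialization_baseSet
  obtain ⟨δ, δpos, hδ⟩ := Metric.isOpen_iff.mp (T.open_baseSet.preimage hgc) s hU
  have key : ∀ u ∈ Icc (0:ℝ) 1, s ≤ u → u - s < δ → u ∈ S := by
    intro u huI hsu hud
    obtain ⟨t, htS, htδ⟩ := exists_lt_of_lt_csSup hSne (by linarith : s - δ < s)
    have hts : t ≤ s := le_csSup hbdd htS
    obtain ⟨⟨ht0, ht1⟩, w, hw, hdw⟩ := htS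
    have hmem : ∀ v ∈ Icc t u, g v ∈ T.baseSet := by
      intro v hv
      apply hδ
      rw [Metric.mem_ball, Real.dist_eq, abs_lt]
      constructor <;> [linarith [hv.1]; linarith [hv.2]]
    have hwsrc : w ∈ T.source := T.mem_source.mpr (hw ▸ hmem t ⟨le_rfl, hts.trans hsu⟩)
    set i := (T w).2 with hi
    set σ : ℝ → M₁ := fun v => T.toPartialHomeomorph.symm (g v, i) with hσdef
    have hσ : ∀ v ∈ Icc t u, π (σ v) = g v := fun v hv =>
      T.proj_symm_apply (T.mem_target.mpr (hmem v hv))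
    have hσt : σ t = w := by
      have h1 : T w = (g t, i) := by
        refine Prod.ext ?_ rfl
        rw [T.coe_fst hwsrc, hw]
      rw [hσdef]
      show T.toPartialHomeomorph.symm (g t, i) = w
      rw [← h1]
      exact T.toPartialHomeomorph.left_inv hwsrc
    have hσc : ContinuousOn σ (Icc t u) := by
      apply T.toPartialHomeomorph.continuousOn_symm.comp
        ((hgc.prodMk continuous_const).continuousOn)
      intro v hv
      exact T.mem_target.mpr (hmem v hv)
    have hlift := lift_edist_le hloc g (hts.trans hsu) hσc hσ
    refine ⟨huI, σ u, hσ u (right_mem_Icc.mpr (hts.trans hsu)), ?_⟩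
    have hadd := eVariationOn.Icc_add_Icc g (s := univ) ht0 (hts.trans hsu) (mem_univ t)
    simp only [univ_inter] at hadd
    calc edist z (σ u) ≤ edist z w + edist w (σ u) := edist_triangle _ _ _
      _ = edist z w + edist (σ t) (σ u) := by rw [hσt]
      _ ≤ eVariationOn g (Icc 0 t) + eVariationOn g (Icc t u) := add_le_add hdw hlift
      _ = eVariationOn g (Icc 0 u) := hadd
  have hsS : s ∈ S := key s ⟨hsa, hsb⟩ le_rfl (by linarith)
  have hs1 : s = 1 := by
    by_contra hne
    have hslt : s < 1 := lt_of_le_of_ne hsb hne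
    have huI : min 1 (s + δ / 2) ∈ Icc (0:ℝ) 1 :=
      ⟨le_min (by linarith) (by linarith), min_le_left _ _⟩
    have hsu : s ≤ min 1 (s + δ / 2) := le_min hsb (by linarith)
    have huS := key _ huI hsu (by
      have : min 1 (s + δ / 2) ≤ s + δ / 2 := min_le_right _ _
      linarith)
    have h1 : min 1 (s + δ / 2) ≤ s := le_csSup hbdd huS
    have h2 : s < min 1 (s + δ / 2) := lt_min hslt (by linarith)
    linarith
  obtain ⟨_, w, hw, hdw⟩ := hsS
  rw [hs1] at hw hdw
  exact ⟨w, by rw [hw, hg1], hdw.trans_eq (by rw [hvar])⟩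

/-- **Lemma 2.2.** Let `π : M₁ → M₀` be a covering map between metric spaces which is a
local isometry, `x ∈ M₀` and `y ∈ π⁻¹(x)`. If `z` lies in the Dirichlet fundamental domain
`D_y` and `π(z)` can be joined to `x` by a path of length `< r`, then `dist z y < r`.
Consequently, if every point of `K ⊆ M₀` can be joined to `x` by a path of length `< r`,
then `π⁻¹(K) ∩ D_y ⊆ B(y, r)`. -/
theorem dirichletDomain_inter_preimage_subset_ball
    {M₁ M₀ : Type*} [MetricSpace M₁] [MetricSpace M₀]
    (π : M₁ → M₀) (hcov : IsCoveringMap π) (hloc : IsLocalIsometry π)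
    (x : M₀) (y : M₁) (hy : π y = x) (r : ℝ) :
    (∀ z : M₁, z ∈ dirichletDomain π x y →
      (∃ γ : Path (π z) x, pathLength γ < ENNReal.ofReal r) → dist z y < r) ∧
    (∀ K : Set M₀, (∀ p ∈ K, ∃ γ : Path p x, pathLength γ < ENNReal.ofReal r) →
      π ⁻¹' K ∩ dirichletDomain π x y ⊆ Metric.ball y r) := by
  constructor
  · intro z hz ⟨γ, hγ⟩
    obtain ⟨w, hw, hdw⟩ := exists_fiber_point hcov hloc z γ
    have h1 : dist z w < r := by
      rw [← edist_lt_ofReal]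
      exact lt_of_le_of_lt hdw hγ
    exact lt_of_le_of_lt (hz w hw) h1
  · intro K hK z ⟨hzK, hzD⟩
    obtain ⟨γ, hγ⟩ := hK (π z) hzK
    rw [Metric.mem_ball]
    obtain ⟨w, hw, hdw⟩ := exists_fiber_point hcov hloc z γ
    have h1 : dist z w < r := by
      rw [← edist_lt_ofReal]
      exact lt_of_le_of_lt hdw hγ
    exact lt_of_le_of_lt (hzD w hw) h1
end
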